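/- There is no group homomorphism f from the additive group L = {(a,b) ∈ ℤ² : a + b is even} to the multiplicative group ℂˣ such that f(γ) = −1 for every root γ ∈ Φ. (This is the nonexistence of an elliptic endoscopic torus of G₂ attached to the subgroup {±1} of the Weyl group.) -/

import Mathlib

noncomputable section

/-- The set of roots of `G₂`. -/
def Φ : Set (ℝ × ℝ) :=
  {(2,0), (-2,0), (1,1), (1,-1), (-1,1), (-1,-1),
   (0,2), (0,-2), (3,1), (3,-1), (-3,1), (-3,-1)}

/-- The root lattice `L = {(a,b) ∈ ℤ² : a + b even}` of `G₂`, as an additive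
subgroup of `ℝ²`. -/
def L : AddSubgroup (ℝ × ℝ) where
  carrier := {x | ∃ a b : ℤ, x = ((a : ℝ), (b : ℝ)) ∧ Even (a + b)}
  zero_mem' := ⟨0, 0, by norm_num <;> first | rfl | simp [Prod.ext_iff], by decide⟩
  add_mem' := by
    rintro x y ⟨a, b, rfl, hab⟩ ⟨c, d, rfl, hcd⟩
    exact ⟨a + c, b + d, by push_cast; rw [Prod.mk_add_mk],
      by rw [show a + c + (b + d) = (a + b) + (c + d) by ring]; exact hab.add hcd⟩
  neg_mem' := by
    rintro x ⟨a, b, rfl, hab⟩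
    exact ⟨-a, -b, by push_cast; rfl,
      by rw [show -a + -b = -(a + b) by ring]; exact hab.neg⟩

/-- There is no homomorphism from the root lattice `L` of `G₂` to `ℂˣ` taking the
value `-1` on every root: no elliptic endoscopic torus of `G₂` is attached to the
subgroup `{±1}` of the Weyl group. -/
theorem stmt14 :
    ¬ ∃ f : L → ℂˣ, (∀ x y : L, f (x + y) = f x * f y) ∧
      ∀ γ : L, (γ : ℝ × ℝ) ∈ Φ → f γ = -1 := by
  rintro ⟨f, hmul, hΦ⟩
  have h1 : ((2, 0) : ℝ × ℝ) ∈ L := ⟨2, 0, by norm_num, by decide⟩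
  have h2 : ((1, 1) : ℝ × ℝ) ∈ L := ⟨1, 1, by norm_num, by decide⟩
  have h3 : ((3, 1) : ℝ × ℝ) ∈ L := ⟨3, 1, by norm_num, by decide⟩
  have e1 : f ⟨(2, 0), h1⟩ = -1 := hΦ _ (by simp [Φ])
  have e2 : f ⟨(1, 1), h2⟩ = -1 := hΦ _ (by simp [Φ])
  have e3 : f ⟨(3, 1), h3⟩ = -1 := hΦ _ (by simp [Φ])
  have hsum : (⟨(3, 1), h3⟩ : L) = ⟨(2, 0), h1⟩ + ⟨(1, 1), h2⟩ := by
    ext <;> norm_num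
  rw [hsum, hmul, e1, e2] at e3
  norm_num at e3
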